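/- Let F̂ ∈ ℝ^{d×n}, let Γ ∈ ℝ^{n×n} be symmetric positive semidefinite with symmetric positive semidefinite square root Γ^{1/2}, set H_d = F̂ Γ F̂ᵀ with spectral decomposition H_d = Σ_{i=1}^d λ_i u_i u_iᵀ (orthonormal u_i, λ_1 ≥ ⋯ ≥ λ_d ≥ 0) and rank-k truncation Ĥ_d = Σ_{i=1}^k λ_i u_i u_iᵀ. Let W ∈ ℝ^{r×d} be a design matrix, and define Ψ(W) = (1/2) log det(I_n + Γ^{1/2} F̂ᵀ Wᵀ W F̂ Γ^{1/2}) and Ψ̂(W) = (1/2) log det(I_r + W Ĥ_d Wᵀ). Then Ψ(W) − Ψ̂(W) ≤ (1/2) log det(I_r + W (H_d − Ĥ_d) Wᵀ). -/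

import Mathlib

open Matrix Finset

section Aux

variable {m : Type*} [Fintype m] [DecidableEq m]

open scoped MatrixOrder

lemma aux_one_le_det_one_add {P : Matrix m m ℝ} (hP : P.PosSemidef) :
    1 ≤ (1 + P).det := by
  have hU := hP.1.spectral_theorem
  rw [Unitary.conjStarAlgAut_apply] at hU
  set U : Matrix m m ℝ := (hP.1.eigenvectorUnitary : Matrix m m ℝ) with hUdef
  have hUU : U * star U = 1 := Matrix.mem_unitaryGroup_iff.mp hP.1.eigenvectorUnitary.2
  have h1 : (1 : Matrix m m ℝ) + P
      = U * (1 + diagonal (RCLike.ofReal ∘ hP.1.eigenvalues)) * star U := by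
    rw [Matrix.mul_add, Matrix.add_mul, Matrix.mul_one, hUU, ← hU]
  rw [h1, Matrix.det_mul_right_comm, hUU, one_mul]
  rw [← Matrix.diagonal_one, Matrix.diagonal_add, Matrix.det_diagonal]
  have h2 : (1:ℝ) = ∏ _i : m, (1:ℝ) := by simp
  rw [h2]
  refine Finset.prod_le_prod (fun i _ => zero_le_one) (fun i _ => ?_)
  simp only [Pi.add_apply, Function.comp_apply, Pi.one_apply, RCLike.ofReal_real_eq_id, id]
  linarith [hP.eigenvalues_nonneg i]

lemma aux_det_mono {M N : Matrix m m ℝ} (hM : M.PosSemidef) (hNM : (N - M).PosSemidef) :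
    (1 + M).det ≤ (1 + N).det := by
  have hS : (1 + M).PosDef := Matrix.PosDef.add_posSemidef Matrix.PosDef.one hM
  set T := CFC.sqrt (1 + M) with hTdef
  have hTpsd := (CFC.sqrt_nonneg (1 + M)).posSemidef
  have hTT : T * T = 1 + M := CFC.sqrt_mul_sqrt_self (1 + M) hS.posSemidef.nonneg
  have hdetT : T.det ≠ 0 := by
    intro h
    have h0 : (1 + M).det = 0 := by rw [← hTT, Matrix.det_mul, h, mul_zero]
    exact hS.det_pos.ne' h0
  have hTunit : IsUnit T.det := isUnit_iff_ne_zero.mpr hdetT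
  have hTinv : T * T⁻¹ = 1 := Matrix.mul_nonsing_inv T hTunit
  have hTinv' : T⁻¹ * T = 1 := Matrix.nonsing_inv_mul T hTunit
  have hTih : (T⁻¹)ᴴ = T⁻¹ := by
    rw [Matrix.conjTranspose_nonsing_inv, hTpsd.1.eq]
  have hX : (T⁻¹ * (N - M) * T⁻¹).PosSemidef := by
    have := hNM.conjTranspose_mul_mul_same (T⁻¹)
    rwa [hTih] at this
  have key : (1 : Matrix m m ℝ) + N = T * (1 + T⁻¹ * (N - M) * T⁻¹) * T := by
    have h2 : T * (T⁻¹ * (N - M) * T⁻¹) * T = (T * T⁻¹) * (N - M) * (T⁻¹ * T) := by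
      noncomm_ring
    rw [Matrix.mul_add, Matrix.add_mul, Matrix.mul_one, hTT, h2, hTinv, hTinv',
      Matrix.one_mul, Matrix.mul_one]
    abel
  have hdet1 : 0 < (1 + M).det := hS.det_pos
  have hge1 : 1 ≤ (1 + T⁻¹ * (N - M) * T⁻¹).det := aux_one_le_det_one_add hX
  calc (1 + M).det = (1 + M).det * 1 := (mul_one _).symm
    _ ≤ (1 + M).det * (1 + T⁻¹ * (N - M) * T⁻¹).det := by
        exact mul_le_mul_of_nonneg_left hge1 hdet1.le
    _ = (1 + N).det := by
        rw [key, Matrix.det_mul, Matrix.det_mul, ← hTT, Matrix.det_mul]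
        ring

lemma aux_det_one_add_add_le {B C : Matrix m m ℝ} (hB : B.PosSemidef) (hC : C.PosSemidef) :
    (1 + (B + C)).det ≤ (1 + B).det * (1 + C).det := by
  have hS : (1 + B).PosDef := Matrix.PosDef.add_posSemidef Matrix.PosDef.one hB
  set T := CFC.sqrt (1 + B) with hTdef
  have hTpsd := (CFC.sqrt_nonneg (1 + B)).posSemidef
  have hTT : T * T = 1 + B := CFC.sqrt_mul_sqrt_self (1 + B) hS.posSemidef.nonneg
  have hdetT : T.det ≠ 0 := by
    intro h
    have h0 : (1 + B).det = 0 := by rw [← hTT, Matrix.det_mul, h, mul_zero]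
    exact hS.det_pos.ne' h0
  have hTunit : IsUnit T.det := isUnit_iff_ne_zero.mpr hdetT
  have hTinv : T * T⁻¹ = 1 := Matrix.mul_nonsing_inv T hTunit
  have hTinv' : T⁻¹ * T = 1 := Matrix.nonsing_inv_mul T hTunit
  have hTih : (T⁻¹)ᴴ = T⁻¹ := by
    rw [Matrix.conjTranspose_nonsing_inv, hTpsd.1.eq]
  set R := CFC.sqrt C with hRdef
  have hRpsd := (CFC.sqrt_nonneg C).posSemidef
  have hRR : R * R = C := CFC.sqrt_mul_sqrt_self C hC.nonneg
  have hRh : Rᴴ = R := hRpsd.1.eq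
  have key : (1 : Matrix m m ℝ) + (B + C) = T * (1 + T⁻¹ * C * T⁻¹) * T := by
    have h2 : T * (T⁻¹ * C * T⁻¹) * T = (T * T⁻¹) * C * (T⁻¹ * T) := by noncomm_ring
    rw [Matrix.mul_add, Matrix.add_mul, Matrix.mul_one, hTT, h2, hTinv, hTinv',
      Matrix.one_mul, Matrix.mul_one]
    abel
  have syl1 : (1 + T⁻¹ * C * T⁻¹).det = (1 + C * (T⁻¹ * T⁻¹)).det := by
    have := Matrix.det_one_add_mul_comm (T⁻¹) (C * T⁻¹)
    rw [show T⁻¹ * (C * T⁻¹) = T⁻¹ * C * T⁻¹ by noncomm_ring,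
      show C * T⁻¹ * T⁻¹ = C * (T⁻¹ * T⁻¹) by noncomm_ring] at this
    exact this
  have syl2 : (1 + C * (T⁻¹ * T⁻¹)).det = (1 + R * (T⁻¹ * T⁻¹) * R).det := by
    have := Matrix.det_one_add_mul_comm R (R * (T⁻¹ * T⁻¹))
    rw [show R * (R * (T⁻¹ * T⁻¹)) = (R * R) * (T⁻¹ * T⁻¹) by noncomm_ring, hRR,
      show R * (T⁻¹ * T⁻¹) * R = R * (T⁻¹ * T⁻¹) * R by rfl] at this
    exact this
  have hinnerpsd : (T⁻¹ * T⁻¹).PosSemidef := by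
    have := Matrix.posSemidef_conjTranspose_mul_self (T⁻¹)
    rwa [hTih] at this
  have hMpsd : (R * (T⁻¹ * T⁻¹) * R).PosSemidef := by
    have := hinnerpsd.conjTranspose_mul_mul_same R
    rwa [hRh] at this
  have hsub : (C - R * (T⁻¹ * T⁻¹) * R).PosSemidef := by
    have hone : (1 : Matrix m m ℝ) - T⁻¹ * T⁻¹ = T⁻¹ * B * T⁻¹ := by
      have h3 : T⁻¹ * (T * T) * T⁻¹ = (1 : Matrix m m ℝ) := by
        rw [show T⁻¹ * (T * T) * T⁻¹ = (T⁻¹ * T) * (T * T⁻¹) by noncomm_ring, hTinv, hTinv',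
          Matrix.one_mul]
      have h4 : T⁻¹ * (1 + B) * T⁻¹ = T⁻¹ * T⁻¹ + T⁻¹ * B * T⁻¹ := by noncomm_ring
      rw [hTT] at h3
      rw [← h3, h4]
      abel
    have hin : (T⁻¹ * B * T⁻¹).PosSemidef := by
      have := hB.conjTranspose_mul_mul_same (T⁻¹)
      rwa [hTih] at this
    have hmm : (R * (T⁻¹ * B * T⁻¹) * R).PosSemidef := by
      have := hin.conjTranspose_mul_mul_same R
      rwa [hRh] at this
    have heq : C - R * (T⁻¹ * T⁻¹) * R = R * (T⁻¹ * B * T⁻¹) * R := by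
      rw [← hone, ← hRR]; noncomm_ring
    rw [heq]; exact hmm
  have hmono : (1 + R * (T⁻¹ * T⁻¹) * R).det ≤ (1 + C).det := aux_det_mono hMpsd hsub
  have hdet1 : 0 < (1 + B).det := hS.det_pos
  calc (1 + (B + C)).det = (1 + B).det * (1 + T⁻¹ * C * T⁻¹).det := by
        rw [key, Matrix.det_mul, Matrix.det_mul, ← hTT, Matrix.det_mul]; ring
    _ = (1 + B).det * (1 + R * (T⁻¹ * T⁻¹) * R).det := by rw [syl1, syl2]
    _ ≤ (1 + B).det * (1 + C).det := mul_le_mul_of_nonneg_left hmono hdet1.le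

lemma aux_smul_vecMulVec_psd {d : ℕ} {c : ℝ} (hc : 0 ≤ c) (v : Fin d → ℝ) :
    (c • vecMulVec v v).PosSemidef := by
  refine Matrix.PosSemidef.of_dotProduct_mulVec_nonneg ?_ ?_
  · ext i j
    simp [conjTranspose_apply, vecMulVec_apply, mul_comm]
  · intro x
    have hmv : (c • vecMulVec v v) *ᵥ x = c • ((v ⬝ᵥ x) • v) := by
      ext i
      simp [mulVec, vecMulVec_apply, dotProduct, Finset.mul_sum, mul_assoc, mul_comm, mul_left_comm]
    rw [hmv]
    have : star x ⬝ᵥ c • (v ⬝ᵥ x) • v = c * ((v ⬝ᵥ x) * (x ⬝ᵥ v)) := by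
      simp [dotProduct_smul, smul_eq_mul, star_trivial, mul_assoc]
    rw [this, dotProduct_comm x v]
    nlinarith [mul_self_nonneg (v ⬝ᵥ x)]

end Aux

/-- Intermediate bound in the low-rank EIG error estimate:
`Ψ(W) - Ψ̂(W) ≤ (1/2) log det (I_r + W (H_d - Ĥ_d) Wᵀ)`. -/
theorem stmt_7 {d n r : ℕ} (F : Matrix (Fin d) (Fin n) ℝ)
    (Γ Γh : Matrix (Fin n) (Fin n) ℝ)
    (hΓ : Γ.PosSemidef) (hΓh : Γh.PosSemidef) (hΓsq : Γ = Γh * Γh)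
    (lam : Fin d → ℝ) (u : Fin d → (Fin d → ℝ))
    (h_orth : ∀ i j, u i ⬝ᵥ u j = if i = j then 1 else 0)
    (h_decay : ∀ i j : Fin d, i ≤ j → lam j ≤ lam i)
    (h_nonneg : ∀ i, 0 ≤ lam i)
    (h_spec : F * Γ * Fᵀ = ∑ i, lam i • vecMulVec (u i) (u i))
    (k : ℕ) (hk1 : 1 ≤ k) (hkd : k ≤ d)
    (W : Matrix (Fin r) (Fin d) ℝ)
    (hW01 : ∀ i j, W i j = 0 ∨ W i j = 1)
    (hWrow : ∀ i, ∑ j, W i j = 1)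
    (hWcol : ∀ j, (∑ i, W i j) = 0 ∨ (∑ i, W i j) = 1) :
    (1 / 2) * Real.log (1 + Γh * Fᵀ * Wᵀ * W * F * Γh).det -
      (1 / 2) * Real.log
        (1 + W * (∑ i ∈ univ.filter fun i : Fin d => (i : ℕ) < k,
            lam i • vecMulVec (u i) (u i)) * Wᵀ).det ≤
    (1 / 2) * Real.log
        (1 + W * (F * Γ * Fᵀ -
          ∑ i ∈ univ.filter fun i : Fin d => (i : ℕ) < k,
            lam i • vecMulVec (u i) (u i)) * Wᵀ).det := by
  classical
  set Hk : Matrix (Fin d) (Fin d) ℝ :=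
    ∑ i ∈ univ.filter fun i : Fin d => (i : ℕ) < k, lam i • vecMulVec (u i) (u i) with hHkdef
  have hHkpsd : Hk.PosSemidef := by
    rw [hHkdef]
    exact Finset.sum_induction _ _ (fun a b ha hb => ha.add hb) Matrix.PosSemidef.zero
      (fun i _ => aux_smul_vecMulVec_psd (h_nonneg i) (u i))
  have hrest : (F * Γ * Fᵀ - Hk).PosSemidef := by
    have hsplit : F * Γ * Fᵀ - Hk
        = ∑ i ∈ univ.filter fun i : Fin d => ¬ ((i : ℕ) < k),
            lam i • vecMulVec (u i) (u i) := by
      rw [h_spec, hHkdef,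
        ← Finset.sum_filter_add_sum_filter_not univ (fun i : Fin d => (i : ℕ) < k)
          (fun i => lam i • vecMulVec (u i) (u i))]
      abel
    rw [hsplit]
    exact Finset.sum_induction _ _ (fun a b ha hb => ha.add hb) Matrix.PosSemidef.zero
      (fun i _ => aux_smul_vecMulVec_psd (h_nonneg i) (u i))
  have hWct : Wᴴ = Wᵀ := by ext i j; simp [conjTranspose_apply]
  have hB' : (W * Hk * Wᵀ).PosSemidef := by
    have := hHkpsd.mul_mul_conjTranspose_same W
    rwa [hWct] at this
  have hC' : (W * (F * Γ * Fᵀ - Hk) * Wᵀ).PosSemidef := by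
    have := hrest.mul_mul_conjTranspose_same W
    rwa [hWct] at this
  have hsum : W * Hk * Wᵀ + W * (F * Γ * Fᵀ - Hk) * Wᵀ = W * (F * Γ * Fᵀ) * Wᵀ := by
    rw [Matrix.mul_sub, Matrix.sub_mul]
    abel
  have e1 : (1 + Γh * Fᵀ * Wᵀ * W * F * Γh).det
      = (1 + W * (F * Γ * Fᵀ) * Wᵀ).det := by
    calc (1 + Γh * Fᵀ * Wᵀ * W * F * Γh).det
        = (1 + (Γh * Fᵀ * Wᵀ) * (W * F * Γh)).det := by
          rw [show Γh * Fᵀ * Wᵀ * W * F * Γh = (Γh * Fᵀ * Wᵀ) * (W * F * Γh) by simp only [Matrix.mul_assoc]]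
      _ = (1 + (W * F * Γh) * (Γh * Fᵀ * Wᵀ)).det := Matrix.det_one_add_mul_comm _ _
      _ = (1 + W * (F * Γ * Fᵀ) * Wᵀ).det := by
          rw [hΓsq, show (W * F * Γh) * (Γh * Fᵀ * Wᵀ) = W * (F * (Γh * Γh) * Fᵀ) * Wᵀ
            by simp only [Matrix.mul_assoc]]
  have hd1 : 0 < (1 + W * (F * Γ * Fᵀ) * Wᵀ).det := by
    refine (Matrix.PosDef.add_posSemidef Matrix.PosDef.one ?_).det_pos
    rw [← hsum]; exact hB'.add hC'
  have hd2 : 0 < (1 + W * Hk * Wᵀ).det :=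
    (Matrix.PosDef.add_posSemidef Matrix.PosDef.one hB').det_pos
  have hd3 : 0 < (1 + W * (F * Γ * Fᵀ - Hk) * Wᵀ).det :=
    (Matrix.PosDef.add_posSemidef Matrix.PosDef.one hC').det_pos
  have hkey : (1 + W * (F * Γ * Fᵀ) * Wᵀ).det
      ≤ (1 + W * Hk * Wᵀ).det * (1 + W * (F * Γ * Fᵀ - Hk) * Wᵀ).det := by
    rw [← hsum]
    exact aux_det_one_add_add_le hB' hC'
  have hlog : Real.log (1 + W * (F * Γ * Fᵀ) * Wᵀ).det
      ≤ Real.log (1 + W * Hk * Wᵀ).det + Real.log (1 + W * (F * Γ * Fᵀ - Hk) * Wᵀ).det := by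
    have := Real.log_le_log hd1 hkey
    rwa [Real.log_mul hd2.ne' hd3.ne'] at this
  rw [e1]
  linarith
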